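/- Let h₀ ∈ (0,1). With V₀, D₀, p₀, ρ₀, T₀ as in the context, the pushforward measure Measure.map T₀ ρ₀ admits no continuous Lebesgue density: there is no continuous function f : ℝ → ℝ such that Measure.map T₀ ρ₀ equals the Lebesgue measure with density x ↦ ENNReal.ofReal (f x). (The density has jump discontinuities at x = 1 and x = -1, of ratio (1-h₀)⁻¹.) -/

import Mathlib

open MeasureTheory Set

/-- The initial potential: `V₀ x = x²/2` for `|x| < 1` and `|x| - 1/2` otherwise. -/
noncomputable def V₀ (x : ℝ) : ℝ := if |x| < 1 then x ^ 2 / 2 else |x| - 1 / 2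

/-- The normalization constant `D₀ = ∫_{-1}^{1} exp(-x²/2) dx + 2 exp(-1/2)`. -/
noncomputable def D₀ : ℝ := (∫ x in (-1 : ℝ)..1, Real.exp (-x ^ 2 / 2)) + 2 * Real.exp (-1 / 2)

/-- The initial density `p₀ = D₀⁻¹ exp(-V₀)`. -/
noncomputable def p₀ (x : ℝ) : ENNReal := ENNReal.ofReal (D₀⁻¹ * Real.exp (-V₀ x))

/-- The initial measure `ρ₀ = p₀ · Lebesgue`. -/
noncomputable def ρ₀ : Measure ℝ := volume.withDensity p₀

/-- The one-step forward-Euler pushforward map for the Wasserstein gradient flow of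
`ρ ↦ KL(ρ | standard Gaussian)` started at `ρ₀`, with step size `h₀`. -/
noncomputable def T₀ (h₀ : ℝ) (x : ℝ) : ℝ :=
  if |x| < 1 then x else if 1 ≤ x then (1 - h₀) * x + h₀ else (1 - h₀) * x - h₀

/-- For `h₀ ∈ (0,1)`, the pushforward `(T₀)_♯ ρ₀` admits no continuous
Lebesgue density (its density has jump discontinuities at `x = ±1`). -/
lemma D₀_pos : 0 < D₀ := by
  have h1 : 0 ≤ ∫ x in (-1:ℝ)..1, Real.exp (-x ^ 2 / 2) :=
    intervalIntegral.integral_nonneg (by norm_num) fun x _ => (Real.exp_pos _).le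
  have h2 : 0 < 2 * Real.exp (-1/2) := by positivity
  unfold D₀; linarith

lemma measurable_T₀ (h₀ : ℝ) : Measurable (T₀ h₀) := by
  unfold T₀
  apply Measurable.ite
  · exact measurableSet_lt (continuous_abs.measurable) measurable_const
  · exact measurable_id
  · apply Measurable.ite
    · exact measurableSet_le measurable_const measurable_id
    · fun_prop
    · fun_prop

lemma measurable_p₀ : Measurable p₀ := by
  unfold p₀ V₀
  apply Measurable.ennreal_ofReal
  apply Measurable.const_mul
  apply Measurable.exp
  apply Measurable.neg
  apply Measurable.ite
  · exact measurableSet_lt (continuous_abs.measurable) measurable_const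
  · fun_prop
  · fun_prop

lemma lint_Ioo (g : ℝ → ℝ) (hg : Continuous g) (hg0 : ∀ x, 0 ≤ g x) {a b : ℝ} (hab : a ≤ b) :
    ∫⁻ x in Set.Ioo a b, ENNReal.ofReal (g x) = ENNReal.ofReal (∫ x in a..b, g x) := by
  rw [intervalIntegral.integral_of_le hab, integral_Ioc_eq_integral_Ioo]
  exact (ofReal_integral_eq_lintegral_ofReal
    (hg.integrableOn_Ioc.mono_set Set.Ioo_subset_Ioc_self)
    (Filter.Eventually.of_forall fun x => hg0 x)).symm

lemma T₀_preimage_left {h₀ : ℝ} (hh0 : 0 < h₀) (hh1 : h₀ < 1) {y : ℝ}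
    (hy0 : 0 < y) (hy1 : y < 1) :
    T₀ h₀ ⁻¹' Set.Ioo y 1 = Set.Ioo y 1 := by
  ext x
  simp only [Set.mem_preimage, Set.mem_Ioo, T₀]
  constructor
  · intro hx
    split_ifs at hx with h1 h2
    · exact hx
    · exfalso; nlinarith [hx.2]
    · exfalso
      have hx1 : x ≤ -1 := by
        have hge : 1 ≤ |x| := not_lt.1 h1
        rcases le_abs.mp hge with h | h
        · linarith [not_le.1 h2]
        · linarith
      nlinarith [hx.1]
  · intro hx
    have habs : |x| < 1 := abs_lt.2 ⟨by linarith [hx.1], hx.2⟩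
    simp [habs, hx.1, hx.2]

lemma T₀_preimage_right {h₀ : ℝ} (hh0 : 0 < h₀) (hh1 : h₀ < 1) {y : ℝ} (hy : 1 < y) :
    T₀ h₀ ⁻¹' Set.Ioo 1 y = Set.Ioo 1 (1 + (y - 1) / (1 - h₀)) := by
  have h1h : (0:ℝ) < 1 - h₀ := by linarith
  ext x
  simp only [Set.mem_preimage, Set.mem_Ioo, T₀]
  constructor
  · intro hx
    split_ifs at hx with h1 h2
    · exact absurd hx.1 (not_lt.2 (abs_lt.mp h1).2.le)
    · refine ⟨by nlinarith [hx.1], ?_⟩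
      have : x - 1 < (y - 1) / (1 - h₀) := by
        rw [lt_div_iff₀ h1h]; nlinarith [hx.2]
      linarith
    · exfalso
      have hx1 : x ≤ -1 := by
        have hge : 1 ≤ |x| := not_lt.1 h1
        rcases le_abs.mp hge with h | h
        · linarith [not_le.1 h2]
        · linarith
      nlinarith [hx.1]
  · intro hx
    have h1 : ¬ |x| < 1 := by
      rw [not_lt, le_abs]; left; linarith [hx.1]
    have h2 : 1 ≤ x := hx.1.le
    rw [if_neg h1, if_pos h2]
    constructor
    · nlinarith [hx.1]
    · have : (x - 1) * (1 - h₀) < y - 1 := by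
        have := hx.2
        have h3 : x - 1 < (y - 1) / (1 - h₀) := by linarith
        exact (lt_div_iff₀ h1h).mp h3
      nlinarith

noncomputable def gL (x : ℝ) : ℝ := D₀⁻¹ * Real.exp (-(x ^ 2 / 2))
noncomputable def gR (x : ℝ) : ℝ := D₀⁻¹ * Real.exp (-(x - 1 / 2))

lemma gL_cont : Continuous gL := by unfold gL; fun_prop
lemma gR_cont : Continuous gR := by unfold gR; fun_prop
lemma gL_nonneg (x : ℝ) : 0 ≤ gL x :=
  mul_nonneg (inv_nonneg.2 D₀_pos.le) (Real.exp_pos _).le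
lemma gR_nonneg (x : ℝ) : 0 ≤ gR x :=
  mul_nonneg (inv_nonneg.2 D₀_pos.le) (Real.exp_pos _).le

theorem forwardEuler_step_no_continuous_density
    (h₀ : ℝ) (hh0 : 0 < h₀) (hh1 : h₀ < 1) :
    ¬ ∃ f : ℝ → ℝ, Continuous f ∧
      Measure.map (T₀ h₀) ρ₀ = volume.withDensity (fun x => ENNReal.ofReal (f x)) := by
  rintro ⟨f, hf, hmap⟩
  have h1h : (0:ℝ) < 1 - h₀ := by linarith
  set g : ℝ → ℝ := fun x => max (f x) 0 with hgdef
  have hgc : Continuous g := hf.max continuous_const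
  have hg0 : ∀ x, 0 ≤ g x := fun x => le_max_right _ _
  have hofReal : ∀ x, ENNReal.ofReal (f x) = ENNReal.ofReal (g x) := by
    intro x
    rcases le_total 0 (f x) with h | h
    · simp [hgdef, max_eq_left h]
    · rw [ENNReal.ofReal_of_nonpos h, hgdef]
      simp [max_eq_right h]
  -- the basic measure identity
  have hμ : ∀ s : Set ℝ, MeasurableSet s →
      ∫⁻ x in T₀ h₀ ⁻¹' s, p₀ x = ∫⁻ x in s, ENNReal.ofReal (g x) := by
    intro s hs
    have h1 : Measure.map (T₀ h₀) ρ₀ s = ρ₀ (T₀ h₀ ⁻¹' s) :=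
      Measure.map_apply (measurable_T₀ h₀) hs
    have h2 : ρ₀ (T₀ h₀ ⁻¹' s) = ∫⁻ x in T₀ h₀ ⁻¹' s, p₀ x :=
      withDensity_apply _ ((measurable_T₀ h₀) hs)
    have h3 : (volume.withDensity fun x => ENNReal.ofReal (f x)) s
        = ∫⁻ x in s, ENNReal.ofReal (f x) := withDensity_apply _ hs
    rw [← h2, ← h1, hmap, h3]
    exact lintegral_congr fun x => hofReal x
  -- LEFT interval equality : for y ∈ (0,1), ∫ y..1 g = ∫ y..1 gL
  have hleft : ∀ y : ℝ, 0 < y → y < 1 →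
      (∫ x in y..1, g x) = ∫ x in y..1, gL x := by
    intro y hy0 hy1
    have key := hμ (Set.Ioo y 1) measurableSet_Ioo
    rw [T₀_preimage_left hh0 hh1 hy0 hy1] at key
    have hcong : ∫⁻ x in Set.Ioo y 1, p₀ x
        = ∫⁻ x in Set.Ioo y 1, ENNReal.ofReal (gL x) := by
      refine setLIntegral_congr_fun measurableSet_Ioo ?_
      intro x hx
      have habs : |x| < 1 := abs_lt.2 ⟨by linarith [hx.1], hx.2⟩
      unfold p₀ V₀ gL
      rw [if_pos habs]
    rw [hcong, lint_Ioo gL gL_cont gL_nonneg hy1.le,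
      lint_Ioo g hgc hg0 hy1.le] at key
    exact ((ENNReal.ofReal_eq_ofReal_iff
      (intervalIntegral.integral_nonneg hy1.le fun x _ => gL_nonneg x)
      (intervalIntegral.integral_nonneg hy1.le fun x _ => hg0 x)).mp key).symm
  -- RIGHT interval equality : for y ∈ (1,2), ∫ 1..y g = ∫ 1..(1+(y-1)/(1-h₀)) gR
  have hright : ∀ y : ℝ, 1 < y →
      (∫ x in (1:ℝ)..y, g x) = ∫ x in (1:ℝ)..(1 + (y - 1) / (1 - h₀)), gR x := by
    intro y hy
    have hb : (1:ℝ) ≤ 1 + (y - 1) / (1 - h₀) := by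
      have : 0 ≤ (y - 1) / (1 - h₀) := div_nonneg (by linarith) h1h.le
      linarith
    have key := hμ (Set.Ioo 1 y) measurableSet_Ioo
    rw [T₀_preimage_right hh0 hh1 hy] at key
    have hcong : ∫⁻ x in Set.Ioo 1 (1 + (y - 1) / (1 - h₀)), p₀ x
        = ∫⁻ x in Set.Ioo 1 (1 + (y - 1) / (1 - h₀)), ENNReal.ofReal (gR x) := by
      refine setLIntegral_congr_fun measurableSet_Ioo ?_
      intro x hx
      have habs : ¬ |x| < 1 := by
        rw [not_lt, le_abs]; left; linarith [hx.1]
      have habs2 : |x| = x := abs_of_pos (by linarith [hx.1])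
      unfold p₀ V₀ gR
      rw [if_neg habs, habs2]
    rw [hcong, lint_Ioo gR gR_cont gR_nonneg hb, lint_Ioo g hgc hg0 hy.le] at key
    exact ((ENNReal.ofReal_eq_ofReal_iff
      (intervalIntegral.integral_nonneg hb fun x _ => gR_nonneg x)
      (intervalIntegral.integral_nonneg hy.le fun x _ => hg0 x)).mp key).symm
  -- F and its derivative at 1
  set F : ℝ → ℝ := fun y => ∫ x in (1:ℝ)..y, g x with hFdef
  have hF : HasDerivAt F (g 1) 1 :=
    intervalIntegral.integral_hasDerivAt_right (hgc.intervalIntegrable 1 1)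
      (hgc.stronglyMeasurableAtFilter _ _) hgc.continuousAt
  -- Gl and derivative
  set Gl : ℝ → ℝ := fun y => ∫ x in (1:ℝ)..y, gL x with hGLdef
  have hGL : HasDerivAt Gl (gL 1) 1 :=
    intervalIntegral.integral_hasDerivAt_right (gL_cont.intervalIntegrable 1 1)
      (gL_cont.stronglyMeasurableAtFilter _ _) gL_cont.continuousAt
  -- Gr and derivative
  set Gr : ℝ → ℝ := fun y => ∫ x in (1:ℝ)..(1 + (y - 1) / (1 - h₀)), gR x with hGRdef
  have hGR : HasDerivAt Gr (gR 1 * (1 - h₀)⁻¹) 1 := by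
    have hH : HasDerivAt (fun u => ∫ x in (1:ℝ)..u, gR x) (gR 1) (1 + ((1:ℝ) - 1) / (1 - h₀)) := by
      have : (1 + ((1:ℝ) - 1) / (1 - h₀)) = 1 := by simp
      rw [this]
      exact intervalIntegral.integral_hasDerivAt_right (gR_cont.intervalIntegrable 1 1)
        (gR_cont.stronglyMeasurableAtFilter _ _) gR_cont.continuousAt
    have hi : HasDerivAt (fun y : ℝ => 1 + (y - 1) / (1 - h₀)) ((1 - h₀)⁻¹) 1 := by
      have h := (((hasDerivAt_id (1:ℝ)).sub_const 1).div_const (1 - h₀)).const_add 1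
      simpa [one_div] using h
    exact HasDerivAt.comp 1 hH hi
  -- F = Gl on Ioc 0 1, F = Gr on Ico 1 2
  have hFGL : ∀ y ∈ Set.Ioc (0:ℝ) 1, F y = Gl y := by
    rintro y ⟨hy0, hy1⟩
    rcases eq_or_lt_of_le hy1 with rfl | hy1
    · simp [hFdef, hGLdef]
    · simp only [hFdef, hGLdef]
      rw [intervalIntegral.integral_symm y 1, intervalIntegral.integral_symm y 1,
        hleft y hy0 hy1]
  have hFGR : ∀ y ∈ Set.Ico (1:ℝ) 2, F y = Gr y := by
    rintro y ⟨hy1, hy2⟩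
    rcases eq_or_lt_of_le hy1 with rfl | hy1
    · simp [hFdef, hGRdef]
    · simp only [hFdef, hGRdef]
      exact hright y hy1
  -- derive g 1 = gL 1 via uniqueness of derivative within Iic 1
  have hIocmem : Set.Ioc (0:ℝ) 1 ∈ nhdsWithin (1:ℝ) (Set.Iic 1) := by
    rw [mem_nhdsWithin]
    exact ⟨Set.Ioi 0, isOpen_Ioi, by norm_num, fun z hz => ⟨hz.1, hz.2⟩⟩
  have hFGL1 : HasDerivWithinAt F (gL 1) (Set.Iic 1) 1 := by
    refine (hGL.hasDerivWithinAt).congr_of_eventuallyEq ?_ (hFGL 1 ⟨by norm_num, le_refl 1⟩)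
    exact Filter.mem_of_superset hIocmem fun z hz => hFGL z hz
  have heqL : g 1 = gL 1 :=
    (uniqueDiffOn_Iic 1 1 Set.self_mem_Iic).eq_deriv _ hF.hasDerivWithinAt hFGL1
  -- derive g 1 = gR 1 * (1-h₀)⁻¹ via Ici 1
  have hIcomem : Set.Ico (1:ℝ) 2 ∈ nhdsWithin (1:ℝ) (Set.Ici 1) := by
    rw [mem_nhdsWithin]
    exact ⟨Set.Iio 2, isOpen_Iio, by norm_num, fun z hz => ⟨hz.2, hz.1⟩⟩
  have hFGR1 : HasDerivWithinAt F (gR 1 * (1 - h₀)⁻¹) (Set.Ici 1) 1 := by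
    refine (hGR.hasDerivWithinAt).congr_of_eventuallyEq ?_ (hFGR 1 ⟨le_refl 1, by norm_num⟩)
    exact Filter.mem_of_superset hIcomem fun z hz => hFGR z hz
  have heqR : g 1 = gR 1 * (1 - h₀)⁻¹ :=
    (uniqueDiffOn_Ici 1 1 Set.self_mem_Ici).eq_deriv _ hF.hasDerivWithinAt hFGR1
  -- contradiction
  have hgl : gL 1 = D₀⁻¹ * Real.exp (-(1/2)) := by unfold gL; norm_num
  have hgr : gR 1 = D₀⁻¹ * Real.exp (-(1/2)) := by unfold gR; norm_num
  have hc : 0 < D₀⁻¹ * Real.exp (-(1/2)) :=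
    mul_pos (inv_pos.2 D₀_pos) (Real.exp_pos _)
  rw [hgl] at heqL
  rw [hgr] at heqR
  have : D₀⁻¹ * Real.exp (-(1/2)) = D₀⁻¹ * Real.exp (-(1/2)) * (1 - h₀)⁻¹ :=
    heqL.symm.trans heqR
  have hinv : (1 - h₀)⁻¹ = 1 := by
    field_simp at this
    nlinarith [this, hc]
  have : (1:ℝ) - h₀ = 1 := by
    field_simp at hinv
    linarith
  linarith
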